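/- Let ψ be a unit vector in ℂ^d, let k ≥ 1 and a > 0, let p : Fin m → ℝ be a probability vector, let σ_z (z ∈ Fin m) be density matrices on ℂ^d with ∑_z p_z (1 − ⟨ψ|σ_z|ψ⟩) ≤ δ, and let τ be a density matrix on ℂ^m with (1/2)‖τ − D_p‖₁ ≤ ε, where D_p is the diagonal m×m matrix with diagonal entries p_z. Set q_z := τ_{zz} (the real, nonnegative diagonal entries of τ, which sum to 1). Then (1/2)‖∑_z q_z σ_z^{⊗k} − (|ψ⟩⟨ψ|)^{⊗k}‖₁ ≤ ε + kδ/a + k√a. -/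

import Mathlib

open Matrix ComplexOrder

set_option linter.unusedSectionVars false
set_option linter.unusedTactic false
set_option maxHeartbeats 1000000

noncomputable def traceNorm {n : Type*} [Fintype n] [DecidableEq n]
    (A : Matrix n n ℂ) : ℝ :=
  (((Matrix.posSemidef_conjTranspose_mul_self A).1.eigenvectorUnitary : Matrix n n ℂ) *
    Matrix.diagonal ((fun x : ℝ => (x : ℂ)) ∘ (√·) ∘ (Matrix.posSemidef_conjTranspose_mul_self A).1.eigenvalues) *
    (star (Matrix.posSemidef_conjTranspose_mul_self A).1.eigenvectorUnitary : Matrix n n ℂ)).trace.re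

noncomputable def ketbra {d : ℕ} (ψ : Fin d → ℂ) : Matrix (Fin d) (Fin d) ℂ :=
  fun i j => ψ i * (starRingEnd ℂ) (ψ j)

noncomputable def kronPow {d : ℕ} (M : Matrix (Fin d) (Fin d) ℂ) (k : ℕ) :
    Matrix (Fin k → Fin d) (Fin k → Fin d) ℂ :=
  fun i j => ∏ t : Fin k, M (i t) (j t)

noncomputable def fid {d : ℕ} (ψ : Fin d → ℂ) (σ : Matrix (Fin d) (Fin d) ℂ) : ℝ :=
  (∑ i, ∑ j, (starRingEnd ℂ) (ψ i) * σ i j * ψ j).re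

section SqrtHelpers
open scoped MatrixOrder
variable {n : Type*} [Fintype n] [DecidableEq n]

noncomputable def Matrix.PosSemidef.sqrt {M : Matrix n n ℂ} (_hM : M.PosSemidef) :
    Matrix n n ℂ := CFC.sqrt M

lemma Matrix.PosSemidef.sqrt_mul_self {M : Matrix n n ℂ} (hM : M.PosSemidef) :
    hM.sqrt * hM.sqrt = M :=
  CFC.sqrt_mul_sqrt_self M hM.nonneg

lemma Matrix.PosSemidef.posSemidef_sqrt {M : Matrix n n ℂ} (hM : M.PosSemidef) :
    hM.sqrt.PosSemidef :=
  (CFC.sqrt_nonneg M).posSemidef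

lemma Matrix.PosSemidef.eq_sqrt_of_sq_eq {A B : Matrix n n ℂ} (hB : B.PosSemidef)
    (hA : A.PosSemidef) (h : B ^ 2 = A) : B = hA.sqrt :=
  ((CFC.sqrt_eq_iff A B hA.nonneg hB.nonneg).mpr (by rw [← sq]; exact h)).symm

lemma traceNorm_eq (A : Matrix n n ℂ) :
    traceNorm A = ((Matrix.posSemidef_conjTranspose_mul_self A).sqrt.trace).re := by
  have hA := Matrix.posSemidef_conjTranspose_mul_self A
  rw [traceNorm, Matrix.PosSemidef.sqrt, CFC.sqrt_eq_cfc, cfc_nnreal_eq_real _ _ hA.nonneg,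
    hA.1.cfc_eq, Matrix.IsHermitian.cfc, Unitary.conjStarAlgAut_apply]
  have hm : ∀ x : ℝ, √(max x 0) = √x := fun x => by
    rcases le_total x 0 with h | h
    · rw [max_eq_right h, Real.sqrt_zero, Real.sqrt_eq_zero'.mpr h]
    · rw [max_eq_left h]
  simp [Function.comp_def, Real.coe_sqrt, hm]

end SqrtHelpers

section Helpers
variable {n : Type*} [Fintype n] [DecidableEq n]


lemma conj_mul_conj (U B C : Matrix n n ℂ) (hU : star U * U = 1) :
    (U * B * star U) * (U * C * star U) = U * (B * C) * star U := by
  calc (U * B * star U) * (U * C * star U) = U * B * (star U * U) * (C * star U) := by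
        simp only [mul_assoc]
    _ = U * (B * C) * star U := by rw [hU]; simp only [mul_one, mul_assoc]

lemma trace_conj (U B : Matrix n n ℂ) (hU : star U * U = 1) :
    (U * B * star U).trace = B.trace := by
  rw [Matrix.trace_mul_cycle, hU, one_mul]

lemma psd_conj {B : Matrix n n ℂ} (hB : B.PosSemidef) (U : Matrix n n ℂ) :
    (U * B * star U).PosSemidef := by
  rw [Matrix.star_eq_conjTranspose]
  exact hB.mul_mul_conjTranspose_same U

lemma psd_diag_ofReal {f : n → ℝ} (hf : ∀ i, 0 ≤ f i) :
    (Matrix.diagonal (fun i => (f i : ℂ))).PosSemidef :=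
  Matrix.PosSemidef.diagonal fun i => Complex.zero_le_real.2 (hf i)

lemma traceNorm_herm {A : Matrix n n ℂ} (hA : A.IsHermitian) :
    traceNorm A = ∑ i, |hA.eigenvalues i| := by
  obtain ⟨U, hU, hU', f, hspec⟩ :
      ∃ U : Matrix n n ℂ, star U * U = 1 ∧ U * star U = 1 ∧ ∃ f : n → ℝ,
        (A = U * Matrix.diagonal (fun i => (f i : ℂ)) * star U ∧
          f = hA.eigenvalues) := by
    refine ⟨hA.eigenvectorUnitary, Matrix.mem_unitaryGroup_iff'.mp (hA.eigenvectorUnitary).2,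
      Matrix.mem_unitaryGroup_iff.mp (hA.eigenvectorUnitary).2, hA.eigenvalues,
      ?_, rfl⟩
    have hs := hA.spectral_theorem
    rw [Unitary.conjStarAlgAut_apply] at hs
    exact hs
  obtain ⟨hspec, hfeq⟩ := hspec
  have hBpsd : (U * Matrix.diagonal (fun i => (Complex.ofReal |f i|)) * star U).PosSemidef :=
    psd_conj (psd_diag_ofReal fun i => abs_nonneg _) U
  have hsq : (U * Matrix.diagonal (fun i => (Complex.ofReal |f i|)) * star U) ^ 2 = Aᴴ * A := by
    rw [hA.eq, pow_two, conj_mul_conj _ _ _ hU, Matrix.diagonal_mul_diagonal,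
      hspec, conj_mul_conj _ _ _ hU, Matrix.diagonal_mul_diagonal]
    simp only [← Complex.ofReal_mul, abs_mul_abs_self]
  have hsqrt := hBpsd.eq_sqrt_of_sq_eq (Matrix.posSemidef_conjTranspose_mul_self A) hsq
  rw [traceNorm_eq, ← hsqrt, trace_conj _ _ hU, Matrix.trace_diagonal]
  rw [Complex.re_sum, hfeq] at *
  simp

lemma psd_diag_re_nonneg {M : Matrix n n ℂ} (hM : M.PosSemidef) (i : n) :
    0 ≤ (M i i).re := by
  have := hM.re_dotProduct_nonneg (Pi.single i 1)
  simpa [dotProduct, Matrix.mulVec, Pi.single_apply, Finset.sum_ite_eq,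
    Finset.sum_ite_eq'] using this

lemma psd_trace_re_nonneg {M : Matrix n n ℂ} (hM : M.PosSemidef) :
    0 ≤ (M.trace).re := by
  rw [Matrix.trace, Complex.re_sum]
  exact Finset.sum_nonneg fun i _ => psd_diag_re_nonneg hM i

lemma traceNorm_nonneg (A : Matrix n n ℂ) : 0 ≤ traceNorm A := by
  rw [traceNorm_eq]; exact psd_trace_re_nonneg (Matrix.posSemidef_conjTranspose_mul_self A).posSemidef_sqrt

lemma psd_sum {ι : Type*} [Fintype ι] (f : ι → Matrix n n ℂ)
    (h : ∀ z, (f z).PosSemidef) : (∑ z, f z).PosSemidef :=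
  Finset.sum_induction f _ (fun _ _ ha hb => ha.add hb) Matrix.PosSemidef.zero
    (fun z _ => h z)

lemma traceNorm_le_of_decomp {P Q : Matrix n n ℂ} (hP : P.PosSemidef) (hQ : Q.PosSemidef) :
    traceNorm (P - Q) ≤ (P.trace).re + (Q.trace).re := by
  have hA : (P - Q).IsHermitian := hP.1.sub hQ.1
  rw [traceNorm_herm hA]
  set U : Matrix n n ℂ := (hA.eigenvectorUnitary : Matrix n n ℂ) with hUdef
  have hU : star U * U = 1 := Matrix.mem_unitaryGroup_iff'.mp (hA.eigenvectorUnitary).2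
  have hU' : U * star U = 1 := Matrix.mem_unitaryGroup_iff.mp (hA.eigenvectorUnitary).2
  have hdiag : star U * (P - Q) * U = Matrix.diagonal (RCLike.ofReal ∘ hA.eigenvalues) := by
    have hs := hA.spectral_theorem
    rw [Unitary.conjStarAlgAut_apply] at hs
    conv_lhs => rw [hs]
    rw [← hUdef]
    simp only [← mul_assoc, hU, one_mul]
    rw [mul_assoc, hU, mul_one]
  have hP' : (star U * P * U).PosSemidef := by
    have := psd_conj hP (star U); rwa [star_star] at this
  have hQ' : (star U * Q * U).PosSemidef := by
    have := psd_conj hQ (star U); rwa [star_star] at this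
  have heig : ∀ i, hA.eigenvalues i = ((star U * P * U) i i).re - ((star U * Q * U) i i).re := by
    intro i
    have h1 : star U * (P - Q) * U = star U * P * U - star U * Q * U := by
      rw [Matrix.mul_sub, Matrix.sub_mul]
    have h2 := congrArg (fun M => (M i i).re) (hdiag.symm.trans h1)
    simpa [Matrix.diagonal_apply_eq] using h2
  have hle : ∀ i, |hA.eigenvalues i| ≤ ((star U * P * U) i i).re + ((star U * Q * U) i i).re := by
    intro i
    rw [heig i]
    have := abs_sub (((star U * P * U) i i).re) (((star U * Q * U) i i).re)
    calc |((star U * P * U) i i).re - ((star U * Q * U) i i).re|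
        ≤ |((star U * P * U) i i).re| + |((star U * Q * U) i i).re| := abs_sub _ _
      _ = _ := by rw [abs_of_nonneg (psd_diag_re_nonneg hP' i),
            abs_of_nonneg (psd_diag_re_nonneg hQ' i)]
  calc ∑ i, |hA.eigenvalues i|
      ≤ ∑ i, (((star U * P * U) i i).re + ((star U * Q * U) i i).re) :=
        Finset.sum_le_sum fun i _ => hle i
    _ = ((star U * P * U).trace).re + ((star U * Q * U).trace).re := by
        rw [Finset.sum_add_distrib, Matrix.trace, Matrix.trace, Complex.re_sum, Complex.re_sum]
        rfl
    _ = (P.trace).re + (Q.trace).re := by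
        have e1 : (star U * P * U).trace = P.trace := by
          have := trace_conj (star U) P (by rwa [star_star]); rwa [star_star] at this
        have e2 : (star U * Q * U).trace = Q.trace := by
          have := trace_conj (star U) Q (by rwa [star_star]); rwa [star_star] at this
        rw [e1, e2]

lemma sum_posPart_diag_le {M : Matrix n n ℂ} (hM : M.IsHermitian) :
    ∑ i, max (M i i).re 0 ≤ (traceNorm M + (M.trace).re) / 2 := by
  set U : Matrix n n ℂ := (hM.eigenvectorUnitary : Matrix n n ℂ) with hUdef
  have hU : star U * U = 1 := Matrix.mem_unitaryGroup_iff'.mp (hM.eigenvectorUnitary).2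
  set g : n → ℝ := fun i => max (hM.eigenvalues i) 0 with hgdef
  set Mp : Matrix n n ℂ := U * Matrix.diagonal (fun i => ((g i : ℝ) : ℂ)) * star U with hMp
  set Mm : Matrix n n ℂ :=
    U * Matrix.diagonal (fun i => (((g i - hM.eigenvalues i : ℝ)) : ℂ)) * star U with hMm
  have hMppsd : Mp.PosSemidef := psd_conj (psd_diag_ofReal fun i => le_max_right _ _) U
  have hMmpsd : Mm.PosSemidef :=
    psd_conj (psd_diag_ofReal fun i => by simp [hgdef]) U
  have hspec : M = U * Matrix.diagonal (fun i => ((hM.eigenvalues i : ℝ) : ℂ)) * star U := by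
    have hs := hM.spectral_theorem
    rw [Unitary.conjStarAlgAut_apply] at hs
    exact hs
  have hsub : M = Mp - Mm := by
    rw [hMp, hMm, ← Matrix.sub_mul, ← Matrix.mul_sub, Matrix.diagonal_sub]
    have : (Matrix.diagonal fun i => ((g i : ℝ) : ℂ) - ((g i - hM.eigenvalues i : ℝ) : ℂ))
        = Matrix.diagonal fun i => ((hM.eigenvalues i : ℝ) : ℂ) := by
      congr 1; funext i; push_cast; ring
    rw [this]
    exact hspec
  have hdle : ∀ i, max (M i i).re 0 ≤ (Mp i i).re := by
    intro i
    have h1 : (M i i).re = (Mp i i).re - (Mm i i).re := by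
      rw [hsub]; simp [Matrix.sub_apply]
    refine max_le ?_ (psd_diag_re_nonneg hMppsd i)
    rw [h1]
    have := psd_diag_re_nonneg hMmpsd i
    linarith
  have htrMp : (Mp.trace).re = ∑ i, g i := by
    rw [hMp, trace_conj _ _ hU, Matrix.trace_diagonal, Complex.re_sum]
    simp
  have htrM : (M.trace).re = ∑ i, hM.eigenvalues i := by
    conv_lhs => rw [hspec]
    rw [trace_conj _ _ hU, Matrix.trace_diagonal, Complex.re_sum]
    simp
  have hmaxabs : ∀ x : ℝ, max x 0 = (|x| + x) / 2 := by
    intro x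
    rcases le_or_gt x 0 with h | h
    · rw [max_eq_right h, abs_of_nonpos h]; ring
    · rw [max_eq_left h.le, abs_of_pos h]; ring
  calc ∑ i, max (M i i).re 0 ≤ ∑ i, (Mp i i).re := Finset.sum_le_sum fun i _ => hdle i
    _ = (Mp.trace).re := by rw [Matrix.trace, Complex.re_sum]; rfl
    _ = ∑ i, g i := htrMp
    _ = (traceNorm M + (M.trace).re) / 2 := by
        rw [traceNorm_herm hM, htrM, ← Finset.sum_add_distrib, Finset.sum_div]
        exact Finset.sum_congr rfl fun i _ => hmaxabs _

/-- Cauchy–Schwarz for the complex dot product. -/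
lemma dotProduct_cs (x y : n → ℂ) :
    ‖dotProduct (star x) y‖ ^ 2
      ≤ (dotProduct (star x) x).re * (dotProduct (star y) y).re := by
  have h := norm_inner_le_norm (𝕜 := ℂ)
    ((WithLp.toLp 2 x)) ((WithLp.toLp 2 y))
  rw [EuclideanSpace.inner_toLp_toLp, dotProduct_comm] at h
  have hx : (dotProduct (star x) x).re = ‖(WithLp.toLp 2 x)‖ ^ 2 := by
    have := inner_self_eq_norm_sq (𝕜 := ℂ) (WithLp.toLp 2 x)
    rw [EuclideanSpace.inner_toLp_toLp, dotProduct_comm] at this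
    exact this
  have hy : (dotProduct (star y) y).re = ‖(WithLp.toLp 2 y)‖ ^ 2 := by
    have := inner_self_eq_norm_sq (𝕜 := ℂ) (WithLp.toLp 2 y)
    rw [EuclideanSpace.inner_toLp_toLp, dotProduct_comm] at this
    exact this
  rw [hx, hy, ← mul_pow]
  have habs : ‖dotProduct (star x) y‖
      = ‖dotProduct (star x) y‖ := rfl
  rw [habs]
  have h0 : (0:ℝ) ≤ ‖dotProduct (star x) y‖ := norm_nonneg _
  nlinarith [norm_nonneg ((WithLp.toLp 2 x)),
    norm_nonneg ((WithLp.toLp 2 y))]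

lemma re_dot_self (y : n → ℂ) :
    (dotProduct (star y) y).re = ∑ i, ‖y i‖ ^ 2 := by
  rw [dotProduct, Complex.re_sum]
  refine Finset.sum_congr rfl fun i _ => ?_
  simp [Pi.star_apply, Complex.star_def, ← Complex.normSq_eq_norm_sq,
    ← Complex.normSq_eq_conj_mul_self]

/-- quadratic form of a PSD matrix is at most its trace times the norm². -/
lemma psd_quadform_le_trace {M : Matrix n n ℂ} (hM : M.PosSemidef) (x : n → ℂ) :
    (dotProduct (star x) (M *ᵥ x)).re
      ≤ (M.trace).re * (dotProduct (star x) x).re := by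
  classical
  set S := hM.sqrt with hSdef
  have hS : S * S = M := hM.sqrt_mul_self
  have hSh : S.IsHermitian := hM.posSemidef_sqrt.1
  have key : dotProduct (star x) (M *ᵥ x)
      = dotProduct (star (S *ᵥ x)) (S *ᵥ x) := by
    conv_rhs => rw [Matrix.star_mulVec, Matrix.dotProduct_mulVec, Matrix.vecMul_vecMul,
      hSh.eq, hS]
    exact Matrix.dotProduct_mulVec _ _ _
  rw [key, re_dot_self]
  have htr : (M.trace).re = ∑ i, ∑ j, ‖S i j‖ ^ 2 := by
    rw [← hS, Matrix.trace, Complex.re_sum]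
    refine Finset.sum_congr rfl fun i _ => ?_
    rw [Matrix.diag_apply, Matrix.mul_apply, Complex.re_sum]
    refine Finset.sum_congr rfl fun j _ => ?_
    have : S j i = (starRingEnd ℂ) (S i j) := by
      conv_lhs => rw [← hSh.eq]
      simp [Matrix.conjTranspose_apply]
    rw [this]
    simp [Complex.mul_conj, ← Complex.normSq_eq_norm_sq]
  have hrow : ∀ i, ‖(S *ᵥ x) i‖ ^ 2
      ≤ (∑ j, ‖S i j‖ ^ 2) * (dotProduct (star x) x).re := by
    intro i
    have h := dotProduct_cs (fun j => (starRingEnd ℂ) (S i j)) x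
    have h1 : dotProduct (star fun j => (starRingEnd ℂ) (S i j)) x = (S *ᵥ x) i := by
      simp [dotProduct, Matrix.mulVec, Pi.star_apply]
    have h2 : (dotProduct (star fun j => (starRingEnd ℂ) (S i j))
        (fun j => (starRingEnd ℂ) (S i j))).re = ∑ j, ‖S i j‖ ^ 2 := by
      rw [re_dot_self]
      simp
    rw [h1, h2] at h
    exact h
  calc ∑ i, ‖(S *ᵥ x) i‖ ^ 2
      ≤ ∑ i, (∑ j, ‖S i j‖ ^ 2) * (dotProduct (star x) x).re :=
        Finset.sum_le_sum fun i _ => hrow i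
    _ = (M.trace).re * (dotProduct (star x) x).re := by
        rw [htr, Finset.sum_mul]

noncomputable def outerM {n : Type*} (v : n → ℂ) : Matrix n n ℂ := Matrix.vecMulVec v (star v)

lemma outerM_apply (v : n → ℂ) (i j : n) :
    outerM v i j = v i * (starRingEnd ℂ) (v j) := rfl

lemma outerM_herm (v : n → ℂ) : (outerM v).IsHermitian := by
  ext i j
  simp [outerM, Matrix.conjTranspose_apply, Matrix.vecMulVec_apply, mul_comm]

lemma vecMulVec_mulVec (x y v : n → ℂ) :
    Matrix.vecMulVec x y *ᵥ v = (dotProduct y v) • x := by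
  funext i
  simp only [Matrix.mulVec, Matrix.vecMulVec_apply, dotProduct, Pi.smul_apply,
    smul_eq_mul, Finset.sum_mul]
  exact Finset.sum_congr rfl fun j _ => by ring

lemma outerM_psd (v : n → ℂ) : (outerM v).PosSemidef := by
  refine Matrix.PosSemidef.of_dotProduct_mulVec_nonneg (outerM_herm v) fun x => ?_
  rw [outerM, _root_.vecMulVec_mulVec, dotProduct_smul]
  have : dotProduct (star x) v = star (dotProduct (star v) x) :=
    Matrix.star_dotProduct _ _
  rw [smul_eq_mul, this]
  exact mul_star_self_nonneg (dotProduct (star v) x)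

lemma outerM_trace (v : n → ℂ) : (outerM v).trace = dotProduct (star v) v := by
  rw [Matrix.trace, dotProduct]
  exact Finset.sum_congr rfl fun i _ => mul_comm _ _

lemma psd_smul {M : Matrix n n ℂ} (hM : M.PosSemidef) {r : ℝ} (hr : 0 ≤ r) :
    (((r : ℝ) : ℂ) • M).PosSemidef := by
  refine Matrix.PosSemidef.of_dotProduct_mulVec_nonneg ?_ fun x => ?_
  · unfold Matrix.IsHermitian
    rw [Matrix.conjTranspose_smul, hM.1.eq]
    congr 1
    simp [Complex.star_def, Complex.conj_ofReal]
  · rw [Matrix.smul_mulVec, dotProduct_smul, smul_eq_mul]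
    exact mul_nonneg (Complex.zero_le_real.2 hr) (hM.dotProduct_mulVec_nonneg x)

lemma mul_vecMulVec (A : Matrix n n ℂ) (x y : n → ℂ) :
    A * Matrix.vecMulVec x y = Matrix.vecMulVec (A *ᵥ x) y := by
  ext i j
  simp [Matrix.mul_apply, Matrix.vecMulVec_apply, Matrix.mulVec, dotProduct,
    Finset.sum_mul]
  exact Finset.sum_congr rfl fun l _ => by ring

lemma vecMulVec_mul (x y : n → ℂ) (A : Matrix n n ℂ) :
    Matrix.vecMulVec x y * A = Matrix.vecMulVec x (y ᵥ* A) := by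
  ext i j
  simp [Matrix.mul_apply, Matrix.vecMulVec_apply, Matrix.vecMul, dotProduct,
    Finset.mul_sum]
  exact Finset.sum_congr rfl fun l _ => by ring

lemma herm_move {A : Matrix n n ℂ} (hA : A.IsHermitian) (x y : n → ℂ) :
    dotProduct (star (A *ᵥ x)) y = dotProduct (star x) (A *ᵥ y) := by
  rw [Matrix.star_mulVec, hA.eq, Matrix.dotProduct_mulVec]

lemma trace_P_mul (φ : n → ℂ) (ρ : Matrix n n ℂ) :
    (outerM φ * ρ).trace = dotProduct (star φ) (ρ *ᵥ φ) := by
  rw [outerM, _root_.vecMulVec_mul, Matrix.trace, dotProduct]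
  simp only [Matrix.diag_apply, Matrix.vecMulVec_apply, Matrix.vecMul, Matrix.mulVec,
    dotProduct, Finset.mul_sum]
  rw [Finset.sum_comm]
  exact Finset.sum_congr rfl fun i _ => Finset.sum_congr rfl fun j _ => by ring

lemma outerM_idem {φ : n → ℂ} (hφ : dotProduct (star φ) φ = 1) :
    outerM φ * outerM φ = outerM φ := by
  have hφ' : (∑ l, star φ l * φ l) = 1 := hφ
  ext i j
  rw [Matrix.mul_apply]
  have h1 : ∀ l, outerM φ i l * outerM φ l j = (outerM φ i j) * (star φ l * φ l) := fun l => by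
    simp only [outerM, Matrix.vecMulVec_apply]; ring
  rw [Finset.sum_congr rfl (fun l _ => h1 l), ← Finset.mul_sum, hφ', mul_one]

/-- fidelity with a pure state is at most one. -/
lemma pure_fid_le_one {ρ : Matrix n n ℂ} (hρ : ρ.PosSemidef) (hρtr : ρ.trace = 1)
    {φ : n → ℂ} (hφ : dotProduct (star φ) φ = 1) :
    (dotProduct (star φ) (ρ *ᵥ φ)).re ≤ 1 := by
  set P := outerM φ with hP
  set Q := (1 : Matrix n n ℂ) - P with hQdef
  have hQherm : Q.IsHermitian := Matrix.isHermitian_one.sub (outerM_herm φ)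
  have hQQ : Q * Q = Q := by
    rw [hQdef]
    calc (1 - P) * (1 - P) = 1 - P - (P - P * P) := by noncomm_ring
      _ = 1 - P := by rw [outerM_idem hφ]; simp [hP]
  have hQρQ : (Q * ρ * Q).PosSemidef := by
    have := hρ.conjTranspose_mul_mul_same Q
    rwa [hQherm.eq] at this
  have htr : (Q * ρ * Q).trace = 1 - dotProduct (star φ) (ρ *ᵥ φ) := by
    rw [Matrix.trace_mul_cycle, hQQ, hQdef, Matrix.sub_mul, one_mul,
      Matrix.trace_sub, hρtr, trace_P_mul]
  have h0 := psd_trace_re_nonneg hQρQ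
  rw [htr] at h0
  simp only [Complex.sub_re, Complex.one_re] at h0
  linarith

lemma pure_decomp {ρ : Matrix n n ℂ} (hρ : ρ.PosSemidef) (hρtr : ρ.trace = 1)
    {φ : n → ℂ} (hφ : dotProduct (star φ) φ = 1) :
    ∃ P Q : Matrix n n ℂ, P.PosSemidef ∧ Q.PosSemidef ∧
      ρ - outerM φ = P - Q ∧
      (P.trace).re ≤ (1 - (dotProduct (star φ) (ρ *ᵥ φ)).re)
          + Real.sqrt (1 - (dotProduct (star φ) (ρ *ᵥ φ)).re) ∧
      (Q.trace).re ≤ (1 - (dotProduct (star φ) (ρ *ᵥ φ)).re)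
          + Real.sqrt (1 - (dotProduct (star φ) (ρ *ᵥ φ)).re) := by
  classical
  set c : ℂ := dotProduct (star φ) (ρ *ᵥ φ) with hcdef
  set F : ℝ := c.re with hFdef
  have hc : c = ((F : ℝ) : ℂ) := by
    have h0 : 0 ≤ c := hρ.dotProduct_mulVec_nonneg φ
    rw [Complex.le_def] at h0
    exact Complex.ext rfl (by simpa using h0.2.symm)
  have hF0 : 0 ≤ F := by
    have h0 : 0 ≤ c := hρ.dotProduct_mulVec_nonneg φ
    rw [Complex.le_def] at h0
    simpa using h0.1
  have hF1 : F ≤ 1 := pure_fid_le_one hρ hρtr hφ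
  set P : Matrix n n ℂ := outerM φ with hPdef
  set Q : Matrix n n ℂ := 1 - P with hQdef
  have hQherm : Q.IsHermitian := Matrix.isHermitian_one.sub (outerM_herm φ)
  have hQQ : Q * Q = Q := by
    rw [hQdef]
    calc (1 - P) * (1 - P) = 1 - P - (P - P * P) := by noncomm_ring
      _ = 1 - P := by rw [outerM_idem hφ]; simp [hPdef]
  have hQρQ : (Q * ρ * Q).PosSemidef := by
    have := hρ.conjTranspose_mul_mul_same Q
    rwa [hQherm.eq] at this
  have htrQρQ : (Q * ρ * Q).trace = 1 - c := by
    rw [Matrix.trace_mul_cycle, hQQ, hQdef, Matrix.sub_mul, one_mul,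
      Matrix.trace_sub, hρtr, trace_P_mul]
  have htrQρQre : ((Q * ρ * Q).trace).re = 1 - F := by
    rw [htrQρQ, Complex.sub_re, Complex.one_re, hFdef]
  -- the vector w
  set w : n → ℂ := ρ *ᵥ φ - c • φ with hwdef
  have horthφw : dotProduct (star φ) w = 0 := by
    rw [hwdef, dotProduct_sub, dotProduct_smul, hφ, ← hcdef]
    simp
  have horthwφ : dotProduct (star w) φ = 0 := by
    rw [Matrix.star_dotProduct, horthφw, star_zero]
  have hwself : dotProduct (star φ) (ρ *ᵥ w) = dotProduct (star w) w := by
    conv_rhs => rw [hwdef]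
    rw [show star w = star (ρ *ᵥ φ) - star (c • φ) by rw [hwdef, star_sub]]
    rw [sub_dotProduct, herm_move hρ.1, star_smul, smul_dotProduct, horthφw]
    simp [hwdef]
  have hwnn : 0 ≤ (dotProduct (star w) w).re := by
    have := dotProduct_star_self_nonneg w
    rw [Complex.le_def] at this
    simpa using this.1
  set ν : ℝ := Real.sqrt ((dotProduct (star w) w).re) with hνdef
  have hν0 : 0 ≤ ν := Real.sqrt_nonneg _
  have hν2 : ν ^ 2 = (dotProduct (star w) w).re := Real.sq_sqrt hwnn
  have hwdot : dotProduct (star w) w = ((ν ^ 2 : ℝ) : ℂ) := by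
    have h0 : 0 ≤ dotProduct (star w) w := dotProduct_star_self_nonneg w
    rw [Complex.le_def] at h0
    rw [hν2]
    exact Complex.ext rfl (by simpa using h0.2.symm)
  -- bound on ν
  have hQw : Q *ᵥ w = w := by
    rw [hQdef, Matrix.sub_mulVec, Matrix.one_mulVec, hPdef, outerM, _root_.vecMulVec_mulVec,
      horthφw, zero_smul, sub_zero]
  have hwρw : dotProduct (star w) (ρ *ᵥ w)
      = dotProduct (star w) ((Q * ρ * Q) *ᵥ w) := by
    rw [← Matrix.mulVec_mulVec, ← Matrix.mulVec_mulVec, hQw]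
    rw [← herm_move hQherm]
    rw [hQw]
  have hwρwle : (dotProduct (star w) (ρ *ᵥ w)).re ≤ (1 - F) * ν ^ 2 := by
    rw [hwρw]
    calc (dotProduct (star w) ((Q * ρ * Q) *ᵥ w)).re
        ≤ ((Q * ρ * Q).trace).re * (dotProduct (star w) w).re :=
          psd_quadform_le_trace hQρQ w
      _ = (1 - F) * ν ^ 2 := by rw [htrQρQre, hν2]
  have hCS : (ν ^ 2) ^ 2 ≤ F * (dotProduct (star w) (ρ *ᵥ w)).re := by
    set S := hρ.sqrt with hSdef
    have hS : S * S = ρ := hρ.sqrt_mul_self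
    have hSh : S.IsHermitian := hρ.posSemidef_sqrt.1
    have sandwich : ∀ x y : n → ℂ, dotProduct (star (S *ᵥ x)) (S *ᵥ y)
        = dotProduct (star x) (ρ *ᵥ y) := by
      intro x y
      rw [herm_move hSh, Matrix.mulVec_mulVec, hS]
    have h := dotProduct_cs (S *ᵥ φ) (S *ᵥ w)
    rw [sandwich, sandwich, sandwich] at h
    rw [hwself, hwdot] at h
    simpa [Complex.norm_real, Real.norm_eq_abs, abs_of_nonneg (sq_nonneg ν), ← hcdef, ← hFdef] using h
  have hX : 0 ≤ (dotProduct (star w) (ρ *ᵥ w)).re := hρ.re_dotProduct_nonneg w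
  have hνb : ν ^ 2 ≤ 1 - F := by
    rcases eq_or_lt_of_le (sq_nonneg ν) with h0 | h0
    · nlinarith
    · nlinarith [mul_le_mul_of_nonneg_left hwρwle hF0,
        mul_le_mul_of_nonneg_right hF1 (mul_nonneg (by linarith : (0:ℝ) ≤ 1 - F) (sq_nonneg ν))]
  have hνle : ν ≤ Real.sqrt (1 - F) := by
    rw [← Real.sqrt_sq hν0]
    exact Real.sqrt_le_sqrt hνb
  have hsqrtnn : 0 ≤ Real.sqrt (1 - F) := Real.sqrt_nonneg _
  -- pieces of the decomposition
  have hρP : ρ * P = Matrix.vecMulVec (ρ *ᵥ φ) (star φ) := by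
    rw [hPdef, outerM, _root_.mul_vecMulVec]
  have hPρ : P * ρ = Matrix.vecMulVec φ (star (ρ *ᵥ φ)) := by
    rw [hPdef, outerM, _root_.vecMulVec_mul, Matrix.star_mulVec, hρ.1.eq]
  have hPρP : P * ρ * P = c • P := by
    rw [hPρ, hPdef, outerM, _root_.vecMulVec_mul]
    have : star (ρ *ᵥ φ) ᵥ* Matrix.vecMulVec φ (star φ)
        = (dotProduct (star (ρ *ᵥ φ)) φ) • star φ := by
      funext j
      simp only [Matrix.vecMul, dotProduct, Matrix.vecMulVec_apply, Pi.smul_apply,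
        smul_eq_mul, Finset.sum_mul]
      exact Finset.sum_congr rfl fun l _ => by ring
    rw [this, herm_move hρ.1, ← hcdef]
    ext i j
    simp only [Matrix.vecMulVec_apply, Pi.smul_apply, Matrix.smul_apply, smul_eq_mul,
      hPdef, outerM]
    ring
  have hQρP : Q * ρ * P = Matrix.vecMulVec w (star φ) := by
    have h1 : Q * ρ * P = ρ * P - P * ρ * P := by rw [hQdef]; noncomm_ring
    rw [h1, hρP, hPρP]
    ext i j
    simp only [Matrix.sub_apply, Matrix.vecMulVec_apply, Matrix.smul_apply, smul_eq_mul,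
      hwdef, Pi.sub_apply, Pi.smul_apply, hPdef, outerM]
    ring
  have hstarw : star w = star (ρ *ᵥ φ) - c • star φ := by
    rw [hwdef, star_sub, star_smul]
    rw [hc]
    simp [Complex.star_def, Complex.conj_ofReal]
  have hPρQ : P * ρ * Q = Matrix.vecMulVec φ (star w) := by
    have h1 : P * ρ * Q = P * ρ - P * ρ * P := by rw [hQdef]; noncomm_ring
    rw [h1, hPρP, hPρ, hstarw]
    ext i j
    simp only [Matrix.sub_apply, Matrix.vecMulVec_apply, Matrix.smul_apply, smul_eq_mul,
      Pi.sub_apply, Pi.smul_apply, hPdef, outerM]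
    ring
  have key0 : ρ - P = Q * ρ * Q + (Q * ρ * P + P * ρ * Q) + (P * ρ * P - P) := by
    rw [hQdef]
    noncomm_ring
  have key : ρ - P = Q * ρ * Q
      + (Matrix.vecMulVec w (star φ) + Matrix.vecMulVec φ (star w)) + (c • P - P) := by
    rw [key0, hQρP, hPρQ, hPρP]
  have hcP : c • P - P = -((((1 - F : ℝ)) : ℂ) • P) := by
    rw [hc, Complex.ofReal_sub, Complex.ofReal_one]
    module
  have htrP : P.trace = 1 := by rw [hPdef, outerM_trace, hφ]
  by_cases hw0 : w = 0
  · refine ⟨Q * ρ * Q, (((1 - F : ℝ)) : ℂ) • P, hQρQ,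
      psd_smul (outerM_psd φ) (by linarith), ?_, ?_, ?_⟩
    · have hz : Matrix.vecMulVec w (star φ) + Matrix.vecMulVec φ (star w) = 0 := by
        ext i j
        simp [Matrix.vecMulVec_apply, hw0]
      rw [key, hz, add_zero, hcP]
      abel
    · rw [htrQρQre]
      linarith
    · rw [Matrix.trace_smul, htrP, smul_eq_mul, mul_one, Complex.ofReal_re]
      linarith
  · have hνpos : 0 < ν := by
      rcases eq_or_lt_of_le hν0 with h0 | h0
      · exfalso
        apply hw0
        have h1 : (dotProduct (star w) w).re = 0 := by rw [← hν2, ← h0]; ring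
        rw [re_dot_self] at h1
        have h2 := (Finset.sum_eq_zero_iff_of_nonneg
          (fun i _ => sq_nonneg (‖w i‖))).mp h1
        funext i
        have h3 := h2 i (Finset.mem_univ i)
        exact norm_eq_zero.mp (sq_eq_zero_iff.mp h3)
      · exact h0
    have hνC : ((ν : ℝ) : ℂ) ≠ 0 := by
      exact_mod_cast ne_of_gt hνpos
    set u : n → ℂ := ((ν⁻¹ : ℝ) : ℂ) • w with hudef
    have hφu : dotProduct (star φ) u = 0 := by
      rw [hudef, dotProduct_smul, horthφw, smul_zero]
    have huφ : dotProduct (star u) φ = 0 := by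
      rw [Matrix.star_dotProduct, hφu, star_zero]
    have huu : dotProduct (star u) u = 1 := by
      rw [hudef, star_smul, smul_dotProduct, dotProduct_smul, hwdot]
      simp only [Complex.star_def, Complex.conj_ofReal, smul_eq_mul, RCLike.star_def]
      calc ((ν⁻¹ : ℝ) : ℂ) * (((ν⁻¹ : ℝ) : ℂ) * ((ν ^ 2 : ℝ) : ℂ))
          = (((ν⁻¹ * (ν⁻¹ * ν ^ 2) : ℝ)) : ℂ) := by push_cast; ring
        _ = 1 := by
            rw [show ν⁻¹ * (ν⁻¹ * ν ^ 2) = 1 by field_simp [ne_of_gt hνpos]]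
            norm_num
    have houterp : (outerM (φ + u)).trace = 2 := by
      rw [outerM_trace, star_add, add_dotProduct, dotProduct_add,
        dotProduct_add, hφ, hφu, huφ, huu]
      norm_num
    have houterm : (outerM (φ - u)).trace = 2 := by
      rw [outerM_trace, star_sub, sub_dotProduct, dotProduct_sub,
        dotProduct_sub, hφ, hφu, huφ, huu]
      norm_num
    have hcross : Matrix.vecMulVec w (star φ) + Matrix.vecMulVec φ (star w)
        = (((ν / 2 : ℝ)) : ℂ) • (outerM (φ + u) - outerM (φ - u)) := by
      ext i j
      simp only [Matrix.add_apply, Matrix.sub_apply, Matrix.smul_apply, outerM,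
        Matrix.vecMulVec_apply, Pi.star_apply, Pi.add_apply, Pi.sub_apply, hudef,
        Pi.smul_apply, smul_eq_mul, star_add, star_sub, star_mul', Complex.star_def,
        Complex.conj_ofReal, map_add, map_sub, _root_.map_mul]
      push_cast
      field_simp
      ring
    refine ⟨Q * ρ * Q + (((ν / 2 : ℝ)) : ℂ) • outerM (φ + u),
      (((1 - F : ℝ)) : ℂ) • P + (((ν / 2 : ℝ)) : ℂ) • outerM (φ - u),
      hQρQ.add (psd_smul (outerM_psd _) (by positivity)),
      (psd_smul (outerM_psd φ) (by linarith)).add (psd_smul (outerM_psd _) (by positivity)),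
      ?_, ?_, ?_⟩
    · rw [key, hcross, hcP]
      module
    · rw [Matrix.trace_add, Matrix.trace_smul, htrQρQ, houterp, Complex.add_re]
      have e1 : ((1 : ℂ) - c).re = 1 - F := by rw [Complex.sub_re, Complex.one_re, hFdef]
      have e2 : ((((ν / 2 : ℝ)) : ℂ) • (2 : ℂ)).re = ν := by
        rw [smul_eq_mul]
        simp [Complex.ofReal_re]
      rw [e1, e2]
      linarith
    · rw [Matrix.trace_add, Matrix.trace_smul, Matrix.trace_smul, htrP, houterm,
        Complex.add_re]
      have e1 : ((((1 - F : ℝ)) : ℂ) • (1 : ℂ)).re = 1 - F := by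
        rw [smul_eq_mul, mul_one, Complex.ofReal_re]
      have e2 : ((((ν / 2 : ℝ)) : ℂ) • (2 : ℂ)).re = ν := by
        rw [smul_eq_mul]
        simp [Complex.ofReal_re]
      rw [e1, e2]
      linarith

noncomputable def kronVec {d : ℕ} (ψ : Fin d → ℂ) (k : ℕ) : (Fin k → Fin d) → ℂ :=
  fun i => ∏ t : Fin k, ψ (i t)

variable {d k : ℕ}

lemma pow_eq_sum_pi {α : Type*} [Fintype α] [DecidableEq α] (f : α → ℂ) (k : ℕ) :
    (∑ x, f x) ^ k = ∑ g : Fin k → α, ∏ t : Fin k, f (g t) := by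
  calc (∑ x, f x) ^ k = ∏ _t : Fin k, (∑ x, f x) := by
        rw [Finset.prod_const, Finset.card_univ, Fintype.card_fin]
    _ = ∑ g ∈ Fintype.piFinset (fun _ : Fin k => Finset.univ), ∏ t, f (g t) :=
        Finset.prod_univ_sum _ _
    _ = ∑ g : Fin k → α, ∏ t, f (g t) := by rw [Fintype.piFinset_univ]

lemma kronPow_mul (A B : Matrix (Fin d) (Fin d) ℂ) :
    kronPow (A * B) k = kronPow A k * kronPow B k := by
  funext i j
  rw [Matrix.mul_apply]
  show ∏ t : Fin k, (A * B) (i t) (j t) = _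
  simp only [Matrix.mul_apply]
  rw [Finset.prod_univ_sum]
  rw [Fintype.piFinset_univ]
  exact Finset.sum_congr rfl fun g _ => by
    show ∏ t, A (i t) (g t) * B (g t) (j t) = kronPow A k i g * kronPow B k g j
    rw [Finset.prod_mul_distrib]
    rfl

lemma kronPow_conjTranspose (A : Matrix (Fin d) (Fin d) ℂ) :
    (kronPow A k)ᴴ = kronPow Aᴴ k := by
  funext i j
  show (starRingEnd ℂ) (∏ t, A (j t) (i t)) = ∏ t, Aᴴ (i t) (j t)
  rw [map_prod]
  rfl

lemma kronPow_psd {A : Matrix (Fin d) (Fin d) ℂ} (hA : A.PosSemidef) :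
    (kronPow A k).PosSemidef := by
  have hS : hA.sqrt * hA.sqrt = A := hA.sqrt_mul_self
  have hSh : hA.sqrt.IsHermitian := hA.posSemidef_sqrt.1
  have h1 : kronPow A k = (kronPow hA.sqrt k)ᴴ * kronPow hA.sqrt k := by
    rw [kronPow_conjTranspose, hSh.eq, ← kronPow_mul, hS]
  rw [h1]
  exact Matrix.posSemidef_conjTranspose_mul_self _

lemma kronPow_trace (A : Matrix (Fin d) (Fin d) ℂ) :
    (kronPow A k).trace = A.trace ^ k := by
  show ∑ i : Fin k → Fin d, ∏ t, A (i t) (i t) = _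
  have h1 : A.trace = ∑ l, A l l := rfl
  rw [h1, pow_eq_sum_pi (fun l => A l l) k]

lemma kronPow_ketbra (ψ : Fin d → ℂ) :
    kronPow (ketbra ψ) k = outerM (kronVec ψ k) := by
  funext i j
  show ∏ t, (ψ (i t) * (starRingEnd ℂ) (ψ (j t))) = kronVec ψ k i * star (kronVec ψ k j)
  rw [Finset.prod_mul_distrib]
  congr 1
  rw [show star (kronVec ψ k j) = (starRingEnd ℂ) (kronVec ψ k j) from rfl, kronVec, map_prod]

lemma kronVec_dot (ψ : Fin d → ℂ) :
    dotProduct (star (kronVec ψ k)) (kronVec ψ k)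
      = (dotProduct (star ψ) ψ) ^ k := by
  rw [dotProduct, dotProduct]
  have h : ∀ i : Fin k → Fin d, star (kronVec ψ k) i * kronVec ψ k i
      = ∏ t, (star (ψ (i t)) * ψ (i t)) := by
    intro i
    rw [Finset.prod_mul_distrib]
    congr 1
    exact map_prod (starRingEnd ℂ) _ _
  rw [Finset.sum_congr rfl fun i _ => h i, ← pow_eq_sum_pi (fun l => star (ψ l) * ψ l) k]
  rfl

lemma kronPow_fid (σ : Matrix (Fin d) (Fin d) ℂ) (ψ : Fin d → ℂ) :
    dotProduct (star (kronVec ψ k)) (kronPow σ k *ᵥ kronVec ψ k)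
      = (dotProduct (star ψ) (σ *ᵥ ψ)) ^ k := by
  have lhs_eq : dotProduct (star (kronVec ψ k)) (kronPow σ k *ᵥ kronVec ψ k)
      = ∑ i : Fin k → Fin d, ∑ j : Fin k → Fin d,
          ∏ t, (star (ψ (i t)) * σ (i t) (j t) * ψ (j t)) := by
    rw [dotProduct]
    simp only [Matrix.mulVec, dotProduct, Finset.mul_sum]
    refine Finset.sum_congr rfl fun i _ => Finset.sum_congr rfl fun j _ => ?_
    have h1 : star (kronVec ψ k) i = ∏ t, star (ψ (i t)) := map_prod (starRingEnd ℂ) _ _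
    rw [h1]
    show (∏ t, star (ψ (i t))) * ((∏ t, σ (i t) (j t)) * ∏ t, ψ (j t)) = _
    rw [← Finset.prod_mul_distrib, ← Finset.prod_mul_distrib]
    exact Finset.prod_congr rfl fun t _ => by ring
  have rhs_eq : (dotProduct (star ψ) (σ *ᵥ ψ)) ^ k
      = ∑ h : Fin k → Fin d × Fin d, ∏ t, (star (ψ ((h t).1)) * σ ((h t).1) ((h t).2)
          * ψ ((h t).2)) := by
    have h1 : dotProduct (star ψ) (σ *ᵥ ψ)
        = ∑ p : Fin d × Fin d, star (ψ p.1) * σ p.1 p.2 * ψ p.2 := by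
      rw [Fintype.sum_prod_type, dotProduct]
      simp only [Matrix.mulVec, dotProduct, Finset.mul_sum]
      refine Finset.sum_congr rfl fun i _ => Finset.sum_congr rfl fun j _ => ?_
      simp only [Pi.star_apply]
      ring
    rw [h1, pow_eq_sum_pi (fun p : Fin d × Fin d => star (ψ p.1) * σ p.1 p.2 * ψ p.2) k]
  rw [lhs_eq, rhs_eq]
  rw [← Equiv.sum_comp (Equiv.arrowProdEquivProdArrow (Fin k) (fun _ => Fin d) (fun _ => Fin d)).symm]
  rw [Fintype.sum_prod_type]
  rfl

end Helpers

/-- Theorem 2 of the paper (no-cloning from statistically private classical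
quantum randomised encoding), instantiated at the points where the quantum
operations are used. -/
theorem no_cloning_statistical {d m : ℕ} (ψ : Fin d → ℂ)
    (hψ : ∑ i, ‖ψ i‖ ^ 2 = 1)
    (k : ℕ) (hk : 1 ≤ k) (a : ℝ) (ha : 0 < a) (δ ε : ℝ)
    (p : Fin m → ℝ) (hp0 : ∀ z, 0 ≤ p z) (hp1 : ∑ z, p z = 1)
    (σ : Fin m → Matrix (Fin d) (Fin d) ℂ)
    (hσ : ∀ z, (σ z).PosSemidef) (hσtr : ∀ z, (σ z).trace = 1)
    (hδ : ∑ z, p z * (1 - fid ψ (σ z)) ≤ δ)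
    (τ : Matrix (Fin m) (Fin m) ℂ) (hτ : τ.PosSemidef) (hτtr : τ.trace = 1)
    (hε : (1 / 2 : ℝ) * traceNorm (τ - Matrix.diagonal (fun z => (p z : ℂ))) ≤ ε) :
    (1 / 2 : ℝ) * traceNorm
        (∑ z, (((τ z z).re : ℝ) : ℂ) • kronPow (σ z) k - kronPow (ketbra ψ) k)
      ≤ ε + (k : ℝ) * δ / a + (k : ℝ) * Real.sqrt a := by
  classical
  set Ψ : (Fin k → Fin d) → ℂ := kronVec ψ k with hΨdef
  -- unit vectors
  have hψdot : dotProduct (star ψ) ψ = 1 := by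
    have h0 : 0 ≤ dotProduct (star ψ) ψ := dotProduct_star_self_nonneg ψ
    rw [Complex.le_def] at h0
    have hre : (dotProduct (star ψ) ψ).re = 1 := by rw [re_dot_self]; exact hψ
    have heq : dotProduct (star ψ) ψ
        = Complex.ofReal ((dotProduct (star ψ) ψ).re) :=
      Complex.ext rfl (by simpa using h0.2.symm)
    rw [heq, hre, Complex.ofReal_one]
  have hΨdot : dotProduct (star Ψ) Ψ = 1 := by
    rw [hΨdef, kronVec_dot, hψdot, one_pow]
  -- fidelities
  have hfe : ∀ z, dotProduct (star ψ) (σ z *ᵥ ψ) = Complex.ofReal (fid ψ (σ z)) := by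
    intro z
    have h1 : dotProduct (star ψ) (σ z *ᵥ ψ)
        = ∑ i, ∑ j, (starRingEnd ℂ) (ψ i) * (σ z) i j * ψ j := by
      rw [dotProduct]
      simp only [Matrix.mulVec, dotProduct, Finset.mul_sum, Pi.star_apply]
      exact Finset.sum_congr rfl fun i _ => Finset.sum_congr rfl fun j _ => by
        simp only [Complex.star_def]; ring
    have h0 : 0 ≤ dotProduct (star ψ) (σ z *ᵥ ψ) := (hσ z).dotProduct_mulVec_nonneg ψ
    rw [Complex.le_def] at h0
    have : dotProduct (star ψ) (σ z *ᵥ ψ)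
        = Complex.ofReal ((dotProduct (star ψ) (σ z *ᵥ ψ)).re) :=
      Complex.ext rfl (by simpa using h0.2.symm)
    rw [this, h1]
    rfl
  have hF0 : ∀ z, 0 ≤ fid ψ (σ z) := by
    intro z
    have := (hσ z).re_dotProduct_nonneg ψ
    have h2 := congrArg Complex.re (hfe z)
    rw [Complex.ofReal_re] at h2
    rw [← h2]
    exact this
  have hF1 : ∀ z, fid ψ (σ z) ≤ 1 := by
    intro z
    have := pure_fid_le_one (hσ z) (hσtr z) hψdot
    have h2 := congrArg Complex.re (hfe z)
    rw [Complex.ofReal_re] at h2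
    rw [← h2]
    exact this
  -- kron powers
  have hρtr : ∀ z, (kronPow (σ z) k).trace = 1 := by
    intro z
    rw [kronPow_trace, hσtr z, one_pow]
  have hFΨ : ∀ z, (dotProduct (star Ψ) (kronPow (σ z) k *ᵥ Ψ)).re
      = fid ψ (σ z) ^ k := by
    intro z
    rw [hΨdef, kronPow_fid, hfe z, ← Complex.ofReal_pow, Complex.ofReal_re]
  -- parameters
  set t : Fin m → ℝ := fun z => 1 - fid ψ (σ z) ^ k with htdef
  have ht0 : ∀ z, 0 ≤ t z := by
    intro z
    have : fid ψ (σ z) ^ k ≤ 1 := pow_le_one₀ (hF0 z) (hF1 z)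
    simp only [htdef]
    linarith
  have htle : ∀ z, t z ≤ (k : ℝ) * (1 - fid ψ (σ z)) := by
    intro z
    have hb := one_add_mul_le_pow (show (-2 : ℝ) ≤ fid ψ (σ z) - 1 by nlinarith [hF0 z]) k
    rw [add_sub_cancel] at hb
    simp only [htdef]
    nlinarith
  set mm : Fin m → ℝ := fun z => min 1 (t z + Real.sqrt (t z)) with hmdef
  have hm0 : ∀ z, 0 ≤ mm z := by
    intro z
    refine le_min one_pos.le ?_
    have := Real.sqrt_nonneg (t z)
    have := ht0 z
    linarith
  have hm1 : ∀ z, mm z ≤ 1 := fun z => min_le_left _ _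
  -- decompositions
  have hdec : ∀ z, ∃ P Q : Matrix (Fin k → Fin d) (Fin k → Fin d) ℂ,
      P.PosSemidef ∧ Q.PosSemidef ∧ kronPow (σ z) k - outerM Ψ = P - Q ∧
      (P.trace).re ≤ mm z ∧ (Q.trace).re ≤ mm z := by
    intro z
    by_cases h : t z + Real.sqrt (t z) ≤ 1
    · obtain ⟨P, Q, hP, hQ, heq, htP, htQ⟩ :=
        pure_decomp (kronPow_psd (hσ z)) (hρtr z) hΨdot
      have hrw : 1 - (dotProduct (star Ψ) (kronPow (σ z) k *ᵥ Ψ)).re = t z := by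
        rw [hFΨ z]
      rw [hrw] at htP htQ
      have hmz : mm z = t z + Real.sqrt (t z) := min_eq_right h
      exact ⟨P, Q, hP, hQ, heq, by rw [hmz]; exact htP, by rw [hmz]; exact htQ⟩
    · have hmz : mm z = 1 := min_eq_left (by linarith [not_le.mp h])
      refine ⟨kronPow (σ z) k, outerM Ψ, kronPow_psd (hσ z), outerM_psd Ψ, rfl, ?_, ?_⟩
      · rw [hmz, hρtr z]
        norm_num
      · rw [hmz, outerM_trace, hΨdot]
        norm_num
  choose P Q hPpsd hQpsd heqz htP htQ using hdec
  -- the diagonal weights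
  have hq0 : ∀ z, 0 ≤ (τ z z).re := fun z => psd_diag_re_nonneg hτ z
  have hq1 : ∑ z, (τ z z).re = 1 := by
    have h1 := congrArg Complex.re hτtr
    rw [Matrix.trace, Complex.re_sum] at h1
    simpa using h1
  have hsum1 : (∑ z, (((τ z z).re : ℝ) : ℂ)) = 1 := by
    rw [← Complex.ofReal_sum, hq1, Complex.ofReal_one]
  -- rewrite the target matrix
  have hXeq : ∑ z, (((τ z z).re : ℝ) : ℂ) • kronPow (σ z) k - kronPow (ketbra ψ) k
      = (∑ z, (((τ z z).re : ℝ) : ℂ) • P z) - (∑ z, (((τ z z).re : ℝ) : ℂ) • Q z) := by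
    rw [kronPow_ketbra]
    have h2 : outerM (kronVec ψ k) = ∑ z, (((τ z z).re : ℝ) : ℂ) • outerM (kronVec ψ k) := by
      rw [← Finset.sum_smul, hsum1, one_smul]
    calc ∑ z, (((τ z z).re : ℝ) : ℂ) • kronPow (σ z) k - outerM (kronVec ψ k)
        = ∑ z, ((((τ z z).re : ℝ) : ℂ) • kronPow (σ z) k
            - (((τ z z).re : ℝ) : ℂ) • outerM (kronVec ψ k)) := by
          conv_lhs => rw [h2]
          rw [Finset.sum_sub_distrib]
      _ = ∑ z, ((((τ z z).re : ℝ) : ℂ) • P z - (((τ z z).re : ℝ) : ℂ) • Q z) := by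
          refine Finset.sum_congr rfl fun z _ => ?_
          rw [← smul_sub, ← smul_sub, ← hΨdef, heqz z]
      _ = _ := Finset.sum_sub_distrib _ _
  have hPsum : (∑ z, (((τ z z).re : ℝ) : ℂ) • P z).PosSemidef :=
    psd_sum _ fun z => psd_smul (hPpsd z) (hq0 z)
  have hQsum : (∑ z, (((τ z z).re : ℝ) : ℂ) • Q z).PosSemidef :=
    psd_sum _ fun z => psd_smul (hQpsd z) (hq0 z)
  have htrPsum : ((∑ z, (((τ z z).re : ℝ) : ℂ) • P z).trace).re
      = ∑ z, (τ z z).re * ((P z).trace).re := by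
    rw [Matrix.trace_sum, Complex.re_sum]
    refine Finset.sum_congr rfl fun z _ => ?_
    rw [Matrix.trace_smul, smul_eq_mul, Complex.mul_re, Complex.ofReal_re, Complex.ofReal_im]
    ring
  have htrQsum : ((∑ z, (((τ z z).re : ℝ) : ℂ) • Q z).trace).re
      = ∑ z, (τ z z).re * ((Q z).trace).re := by
    rw [Matrix.trace_sum, Complex.re_sum]
    refine Finset.sum_congr rfl fun z _ => ?_
    rw [Matrix.trace_smul, smul_eq_mul, Complex.mul_re, Complex.ofReal_re, Complex.ofReal_im]
    ring
  have hmain : (1 / 2 : ℝ) * traceNorm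
      (∑ z, (((τ z z).re : ℝ) : ℂ) • kronPow (σ z) k - kronPow (ketbra ψ) k)
      ≤ ∑ z, (τ z z).re * mm z := by
    rw [hXeq]
    have h1 := traceNorm_le_of_decomp hPsum hQsum
    rw [htrPsum, htrQsum] at h1
    have h2 : ∑ z, (τ z z).re * ((P z).trace).re ≤ ∑ z, (τ z z).re * mm z :=
      Finset.sum_le_sum fun z _ => mul_le_mul_of_nonneg_left (htP z) (hq0 z)
    have h3 : ∑ z, (τ z z).re * ((Q z).trace).re ≤ ∑ z, (τ z z).re * mm z :=
      Finset.sum_le_sum fun z _ => mul_le_mul_of_nonneg_left (htQ z) (hq0 z)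
    linarith
  -- the epsilon part
  have heps : ∑ z, ((τ z z).re - p z) * mm z ≤ ε := by
    set M : Matrix (Fin m) (Fin m) ℂ := τ - Matrix.diagonal (fun z => ((p z : ℝ) : ℂ))
      with hMdef
    have hMherm : M.IsHermitian := hτ.1.sub (psd_diag_ofReal hp0).1
    have hMdiag : ∀ z, (M z z).re = (τ z z).re - p z := by
      intro z
      rw [hMdef]
      simp [Matrix.sub_apply, Matrix.diagonal_apply_eq]
    have hMtr : (M.trace).re = 0 := by
      rw [hMdef, Matrix.trace_sub, hτtr, Matrix.trace_diagonal]
      rw [← Complex.ofReal_sum, hp1]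
      norm_num
    have h2 := sum_posPart_diag_le hMherm
    rw [hMtr, add_zero] at h2
    have h3 : ∀ z, ((τ z z).re - p z) * mm z ≤ max (M z z).re 0 := by
      intro z
      rw [hMdiag z]
      rcases le_or_gt ((τ z z).re - p z) 0 with h | h
      · have : ((τ z z).re - p z) * mm z ≤ 0 := mul_nonpos_of_nonpos_of_nonneg h (hm0 z)
        exact this.trans (le_max_right _ _)
      · have : ((τ z z).re - p z) * mm z ≤ ((τ z z).re - p z) * 1 :=
          mul_le_mul_of_nonneg_left (hm1 z) h.le
        rw [mul_one] at this
        exact this.trans (le_max_left _ _)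
    calc ∑ z, ((τ z z).re - p z) * mm z ≤ ∑ z, max (M z z).re 0 :=
          Finset.sum_le_sum fun z _ => h3 z
      _ ≤ traceNorm M / 2 := h2
      _ ≤ ε := by rw [hMdef]; linarith [hε]
  -- nonnegativity of ε and δ
  have hε0 : 0 ≤ ε := by
    have := traceNorm_nonneg (τ - Matrix.diagonal (fun z => ((p z : ℝ) : ℂ)))
    linarith
  have hδ0 : 0 ≤ δ := by
    have : 0 ≤ ∑ z, p z * (1 - fid ψ (σ z)) :=
      Finset.sum_nonneg fun z _ => mul_nonneg (hp0 z) (by linarith [hF1 z])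
    linarith
  have hk1 : (1 : ℝ) ≤ (k : ℝ) := by exact_mod_cast hk
  have hsa : 0 ≤ Real.sqrt a := Real.sqrt_nonneg a
  -- case analysis on a
  by_cases ha1 : 1 ≤ a
  · -- trivial bound
    have h1 : ∑ z, (τ z z).re * mm z ≤ 1 := by
      calc ∑ z, (τ z z).re * mm z ≤ ∑ z, (τ z z).re * 1 :=
            Finset.sum_le_sum fun z _ => mul_le_mul_of_nonneg_left (hm1 z) (hq0 z)
        _ = 1 := by simp only [mul_one]; exact hq1
    have h2 : (1 : ℝ) ≤ (k : ℝ) * Real.sqrt a := by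
      have hsa1 : 1 ≤ Real.sqrt a := by
        rw [show (1 : ℝ) = Real.sqrt 1 by rw [Real.sqrt_one]]
        exact Real.sqrt_le_sqrt ha1
      nlinarith
    have h3 : 0 ≤ (k : ℝ) * δ / a := by positivity
    linarith [hmain]
  · push_neg at ha1
    have hma : ∀ z, mm z ≤ (k : ℝ) * (1 - fid ψ (σ z)) / a + (k : ℝ) * Real.sqrt a := by
      intro z
      set g : ℝ := 1 - fid ψ (σ z) with hgdef
      have hg0 : 0 ≤ g := by simp only [hgdef]; linarith [hF1 z]
      by_cases hz : g ≤ a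
      · have hb1 : t z ≤ (k : ℝ) * g := htle z
        have hb2 : Real.sqrt (t z) ≤ (k : ℝ) * Real.sqrt a := by
          have e1 : Real.sqrt (t z) ≤ Real.sqrt ((k : ℝ) * a) := by
            apply Real.sqrt_le_sqrt
            calc t z ≤ (k : ℝ) * g := hb1
              _ ≤ (k : ℝ) * a := mul_le_mul_of_nonneg_left hz (by positivity)
          have e2 : Real.sqrt ((k : ℝ) * a) = Real.sqrt (k : ℝ) * Real.sqrt a :=
            Real.sqrt_mul (by positivity) a
          have e3 : Real.sqrt (k : ℝ) ≤ (k : ℝ) := by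
            have h := Real.sqrt_le_sqrt (show (k : ℝ) ≤ (k : ℝ) ^ 2 by nlinarith)
            rwa [Real.sqrt_sq (by positivity)] at h
          calc Real.sqrt (t z) ≤ Real.sqrt (k : ℝ) * Real.sqrt a := by rw [← e2]; exact e1
            _ ≤ (k : ℝ) * Real.sqrt a := mul_le_mul_of_nonneg_right e3 hsa
        have hkg0 : 0 ≤ (k : ℝ) * g := by positivity
        have hb3 : (k : ℝ) * g ≤ (k : ℝ) * g / a := by
          rw [le_div_iff₀ ha]
          nlinarith [mul_le_mul_of_nonneg_left ha1.le hkg0, hkg0]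
        calc mm z ≤ t z + Real.sqrt (t z) := min_le_right _ _
          _ ≤ (k : ℝ) * g / a + (k : ℝ) * Real.sqrt a :=
            add_le_add (hb1.trans hb3) hb2
      · push_neg at hz
        have hb1 : (1 : ℝ) ≤ g / a := (one_le_div ha).mpr hz.le
        have hgk : g ≤ (k : ℝ) * g := by nlinarith
        have hb2 : g / a ≤ (k : ℝ) * g / a := by
          rw [div_le_div_iff₀ ha ha]
          exact mul_le_mul_of_nonneg_right hgk ha.le
        have hb3 : 0 ≤ (k : ℝ) * Real.sqrt a := by positivity
        calc mm z ≤ 1 := hm1 z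
          _ ≤ (k : ℝ) * g / a + (k : ℝ) * Real.sqrt a := by linarith
    have hpm : ∑ z, p z * mm z ≤ (k : ℝ) * δ / a + (k : ℝ) * Real.sqrt a := by
      calc ∑ z, p z * mm z
          ≤ ∑ z, (p z * ((k : ℝ) * (1 - fid ψ (σ z)) / a) + p z * ((k : ℝ) * Real.sqrt a)) := by
            refine Finset.sum_le_sum fun z _ => ?_
            have := mul_le_mul_of_nonneg_left (hma z) (hp0 z)
            rw [mul_add] at this
            exact this
        _ = ((k : ℝ) / a) * (∑ z, p z * (1 - fid ψ (σ z)))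
            + ((k : ℝ) * Real.sqrt a) * (∑ z, p z) := by
            rw [Finset.sum_add_distrib, Finset.mul_sum, Finset.mul_sum]
            congr 1
            · exact Finset.sum_congr rfl fun z _ => by ring
            · exact Finset.sum_congr rfl fun z _ => by ring
        _ ≤ ((k : ℝ) / a) * δ + ((k : ℝ) * Real.sqrt a) * 1 := by
            have h1 : ((k : ℝ) / a) * (∑ z, p z * (1 - fid ψ (σ z))) ≤ ((k : ℝ) / a) * δ :=
              mul_le_mul_of_nonneg_left hδ (by positivity)
            rw [hp1]
            linarith
        _ = (k : ℝ) * δ / a + (k : ℝ) * Real.sqrt a := by ring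
    have hsplit : ∑ z, (τ z z).re * mm z
        = ∑ z, p z * mm z + ∑ z, ((τ z z).re - p z) * mm z := by
      rw [← Finset.sum_add_distrib]
      exact Finset.sum_congr rfl fun z _ => by ring
    calc (1 / 2 : ℝ) * traceNorm
          (∑ z, (((τ z z).re : ℝ) : ℂ) • kronPow (σ z) k - kronPow (ketbra ψ) k)
        ≤ ∑ z, (τ z z).re * mm z := hmain
      _ = ∑ z, p z * mm z + ∑ z, ((τ z z).re - p z) * mm z := hsplit
      _ ≤ ((k : ℝ) * δ / a + (k : ℝ) * Real.sqrt a) + ε := add_le_add hpm heps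
      _ = ε + (k : ℝ) * δ / a + (k : ℝ) * Real.sqrt a := by ring
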